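/- Iteration complexity bound for the inexact Bregman proximal point algorithm: if for every k ≥ 0 it holds that γ_k^{-1}(f(x̃^{k+1}) − f(x^*)) ≤ D_φ(x^*, x^k) − D_φ(x^*, x^{k+1}) + μ_k + γ_k^{-1}(ρη_k + ν_k), and ξ_k := f(x̃^{k+1}) − f(x̃^k), then for every N ≥ 1, f(x̃^N) − f(x^*) ≤ σ_{N−1}^{-1} ( D_φ(x^*, x^0) + Σ_{k=0}^{N−1} μ_k + Σ_{k=0}^{N−1} γ_k^{-1}(ρη_k + ν_k) + Σ_{k=0}^{N−1} σ_{k−1} ξ_k ), where σ_{-1} = 0 and σ_k = Σ_{i=0}^k γ_i^{-1}. -/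

import Mathlib

theorem ibppa_iteration_complexity {E : Type*} [NormedAddCommGroup E]
    (f : E → ℝ) (D : E → E → ℝ) (hD : ∀ a b, 0 ≤ D a b)
    (x xt : ℕ → E) (xstar : E)
    (γ μ η ν : ℕ → ℝ) (hγ : ∀ k, 0 < γ k) (hμ : ∀ k, 0 ≤ μ k)
    (hη : ∀ k, 0 ≤ η k) (hν : ∀ k, 0 ≤ ν k)
    (ρ : ℝ) (hρ : 0 < ρ)
    (hiter : ∀ k, (γ k)⁻¹ * (f (xt (k + 1)) - f xstar) ≤
      D xstar (x k) - D xstar (x (k + 1)) + μ k + (γ k)⁻¹ * (ρ * η k + ν k)) :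
    ∀ N ≥ 1,
      f (xt N) - f xstar ≤
        (∑ i ∈ Finset.range N, (γ i)⁻¹)⁻¹ *
          (D xstar (x 0) + (∑ k ∈ Finset.range N, μ k) +
            (∑ k ∈ Finset.range N, (γ k)⁻¹ * (ρ * η k + ν k)) +
            ∑ k ∈ Finset.range N,
              (∑ i ∈ Finset.range k, (γ i)⁻¹) * (f (xt (k + 1)) - f (xt k))) := by
  intro N hN
  set S : ℕ → ℝ := fun n => ∑ i ∈ Finset.range n, (γ i)⁻¹ with hS
  -- Abel summation identity
  have habel : ∀ n : ℕ,
      (∑ k ∈ Finset.range n, (γ k)⁻¹ * (f (xt (k + 1)) - f xstar)) +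
        (∑ k ∈ Finset.range n, S k * (f (xt (k + 1)) - f (xt k))) =
      S n * (f (xt n) - f xstar) := by
    intro n
    induction n with
    | zero => simp [hS]
    | succ m ih =>
        rw [Finset.sum_range_succ, Finset.sum_range_succ]
        have hSstep : S (m + 1) = S m + (γ m)⁻¹ := Finset.sum_range_succ _ m
        rw [hSstep]
        nlinarith [ih]
  have hSpos : 0 < S N := by
    have : (0:ℕ) ∈ Finset.range N := Finset.mem_range.mpr (by omega)
    exact Finset.sum_pos' (fun i _ => le_of_lt (inv_pos.mpr (hγ i)))
      ⟨0, this, inv_pos.mpr (hγ 0)⟩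
  -- Sum the per-iteration inequality
  have hsum : ∑ k ∈ Finset.range N, (γ k)⁻¹ * (f (xt (k + 1)) - f xstar) ≤
      D xstar (x 0) + (∑ k ∈ Finset.range N, μ k) +
        ∑ k ∈ Finset.range N, (γ k)⁻¹ * (ρ * η k + ν k) := by
    have h1 : ∑ k ∈ Finset.range N, (γ k)⁻¹ * (f (xt (k + 1)) - f xstar) ≤
        ∑ k ∈ Finset.range N,
          (D xstar (x k) - D xstar (x (k + 1)) + μ k + (γ k)⁻¹ * (ρ * η k + ν k)) :=
      Finset.sum_le_sum fun k _ => hiter k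
    have h2 : ∑ k ∈ Finset.range N,
          (D xstar (x k) - D xstar (x (k + 1)) + μ k + (γ k)⁻¹ * (ρ * η k + ν k)) =
        (D xstar (x 0) - D xstar (x N)) + (∑ k ∈ Finset.range N, μ k) +
          ∑ k ∈ Finset.range N, (γ k)⁻¹ * (ρ * η k + ν k) := by
      rw [Finset.sum_add_distrib, Finset.sum_add_distrib,
        Finset.sum_range_sub' (fun k => D xstar (x k))]
    have h3 := hD xstar (x N)
    linarith
  have key : S N * (f (xt N) - f xstar) ≤
      D xstar (x 0) + (∑ k ∈ Finset.range N, μ k) +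
        (∑ k ∈ Finset.range N, (γ k)⁻¹ * (ρ * η k + ν k)) +
        ∑ k ∈ Finset.range N, S k * (f (xt (k + 1)) - f (xt k)) := by
    have := habel N
    linarith
  calc f (xt N) - f xstar = (S N)⁻¹ * (S N * (f (xt N) - f xstar)) := by
        field_simp
    _ ≤ _ := mul_le_mul_of_nonneg_left key (le_of_lt (inv_pos.mpr hSpos))
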